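/- Let C, D be pivotal fusion categories and M a finite semisimple (C,D)-bimodule category. Define the opposite bimodule category M^# to be M^op with actions d ▷^op m := m ◁ d* and m ◁^op c := c* ▷ m. Then the identity functor together with coherence isomorphisms given by the pivots (s_{c,m} = ω_c ▷ id_m, t_{m,d} = id_m ◁ ω⁻¹_d) is an equivalence of (C,D)-bimodule categories Ω: M^{##} → M. -/

import Mathlib

open CategoryTheory MonoidalCategory

/-- Pivotal duality data on a fusion category: duals, duality on morphisms, the pivotal
isomorphism `ω : (−)** ⇒ id` with its naturality, the canonical identifications
`(x ⊗ y)* ≅ y* ⊗ x*` and `e* ≅ e`, and the monoidality of `ω` expressed through them. -/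
structure PivData (C : Type*) [Category C] [MonoidalCategory C] where
  dual : C → C
  dualMap : ∀ {x y : C}, (x ⟶ y) → (dual y ⟶ dual x)
  dualMap_id : ∀ x : C, dualMap (𝟙 x) = 𝟙 (dual x)
  dualMap_comp : ∀ {x y z : C} (f : x ⟶ y) (g : y ⟶ z),
    dualMap (f ≫ g) = dualMap g ≫ dualMap f
  pivot : ∀ x : C, dual (dual x) ≅ x
  pivot_natural : ∀ {x y : C} (f : x ⟶ y),
    dualMap (dualMap f) ≫ (pivot y).hom = (pivot x).hom ≫ f
  μ : ∀ x y : C, dual (x ⊗ y) ≅ dual y ⊗ dual x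
  μ₀ : dual (𝟙_ C) ≅ 𝟙_ C
  pivot_tensor : ∀ x y : C,
    (pivot (x ⊗ y)).hom
      = dualMap (μ x y).inv ≫ (μ (dual y) (dual x)).hom
          ≫ ((pivot x).hom ⊗ₘ (pivot y).hom)
  pivot_unit : (pivot (𝟙_ C)).hom = dualMap μ₀.inv ≫ μ₀.hom

namespace PivData

variable {C : Type*} [Category C] [MonoidalCategory C]

/-- The double dual `x**`. -/
def ddual (P : PivData C) (x : C) : C := P.dual (P.dual x)

/-- The double dual of a morphism. -/
def ddualMap (P : PivData C) {x y : C} (f : x ⟶ y) : P.ddual x ⟶ P.ddual y :=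
  P.dualMap (P.dualMap f)

/-- The canonical identification `(x ⊗ y)** ⟶ x** ⊗ y**`. -/
def ddμ (P : PivData C) (x y : C) : P.ddual (x ⊗ y) ⟶ P.ddual x ⊗ P.ddual y :=
  P.dualMap (P.μ x y).inv ≫ (P.μ (P.dual y) (P.dual x)).hom

/-- The canonical identification `x** ⊗ y** ⟶ (x ⊗ y)**`. -/
def ddμinv (P : PivData C) (x y : C) : P.ddual x ⊗ P.ddual y ⟶ P.ddual (x ⊗ y) :=
  (P.μ (P.dual y) (P.dual x)).inv ≫ P.dualMap (P.μ x y).hom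

/-- The canonical identification `e** ⟶ e`. -/
def ddμ₀ (P : PivData C) : P.ddual (𝟙_ C) ⟶ 𝟙_ C :=
  P.dualMap P.μ₀.inv ≫ P.μ₀.hom

end PivData

/-- The data of a `(C,D)`-bimodule category on `M`: left and right action bifunctors
with the coherence isomorphisms `c`, `γ`, `d`, `δ`, `b` of Definition 2.1,
their naturality, and the pentagon/triangle coherence axioms. -/
structure BimodCat (C : Type*) [Category C] [MonoidalCategory C]
    (D : Type*) [Category D] [MonoidalCategory D]
    (M : Type*) [Category M] where
  act : C → M → M
  actHom : ∀ {c c' : C} {m m' : M}, (c ⟶ c') → (m ⟶ m') → (act c m ⟶ act c' m')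
  actHom_id : ∀ (c : C) (m : M), actHom (𝟙 c) (𝟙 m) = 𝟙 (act c m)
  actHom_comp : ∀ {c₁ c₂ c₃ : C} {m₁ m₂ m₃ : M} (f : c₁ ⟶ c₂) (f' : c₂ ⟶ c₃)
      (g : m₁ ⟶ m₂) (g' : m₂ ⟶ m₃),
    actHom (f ≫ f') (g ≫ g') = actHom f g ≫ actHom f' g'
  ract : M → D → M
  ractHom : ∀ {m m' : M} {d d' : D}, (m ⟶ m') → (d ⟶ d') → (ract m d ⟶ ract m' d')
  ractHom_id : ∀ (m : M) (d : D), ractHom (𝟙 m) (𝟙 d) = 𝟙 (ract m d)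
  ractHom_comp : ∀ {m₁ m₂ m₃ : M} {d₁ d₂ d₃ : D} (g : m₁ ⟶ m₂) (g' : m₂ ⟶ m₃)
      (f : d₁ ⟶ d₂) (f' : d₂ ⟶ d₃),
    ractHom (g ≫ g') (f ≫ f') = ractHom g f ≫ ractHom g' f'
  assocL : ∀ (x y : C) (m : M), act (x ⊗ y) m ≅ act x (act y m)
  assocL_natural : ∀ {x x' y y' : C} {m m' : M} (f : x ⟶ x') (f' : y ⟶ y')
      (g : m ⟶ m'),
    actHom (f ⊗ₘ f') g ≫ (assocL x' y' m').hom = (assocL x y m).hom ≫ actHom f (actHom f' g)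
  unitL : ∀ m : M, act (𝟙_ C) m ≅ m
  unitL_natural : ∀ {m m' : M} (g : m ⟶ m'),
    actHom (𝟙 (𝟙_ C)) g ≫ (unitL m').hom = (unitL m).hom ≫ g
  assocR : ∀ (m : M) (x y : D), ract (ract m x) y ≅ ract m (x ⊗ y)
  assocR_natural : ∀ {m m' : M} {x x' y y' : D} (g : m ⟶ m') (f : x ⟶ x')
      (f' : y ⟶ y'),
    ractHom (ractHom g f) f' ≫ (assocR m' x' y').hom = (assocR m x y).hom ≫ ractHom g (f ⊗ₘ f')
  unitR : ∀ m : M, ract m (𝟙_ D) ≅ m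
  unitR_natural : ∀ {m m' : M} (g : m ⟶ m'),
    ractHom g (𝟙 (𝟙_ D)) ≫ (unitR m').hom = (unitR m).hom ≫ g
  middle : ∀ (c : C) (m : M) (d : D), ract (act c m) d ≅ act c (ract m d)
  middle_natural : ∀ {c c' : C} {m m' : M} {d d' : D} (f : c ⟶ c') (g : m ⟶ m')
      (h : d ⟶ d'),
    ractHom (actHom f g) h ≫ (middle c' m' d').hom = (middle c m d).hom ≫ actHom f (ractHom g h)
  pentagonL : ∀ (x y z : C) (m : M),
    (assocL (x ⊗ y) z m).hom ≫ (assocL x y (act z m)).hom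
      = actHom (α_ x y z).hom (𝟙 m) ≫ (assocL x (y ⊗ z) m).hom
          ≫ actHom (𝟙 x) ((assocL y z m).hom)
  triangleL : ∀ (x : C) (m : M),
    (assocL x (𝟙_ C) m).hom ≫ actHom (𝟙 x) ((unitL m).hom) = actHom (ρ_ x).hom (𝟙 m)
  pentagonR : ∀ (m : M) (x y z : D),
    (assocR (ract m x) y z).hom ≫ (assocR m x (y ⊗ z)).hom
      = ractHom ((assocR m x y).hom) (𝟙 z) ≫ (assocR m (x ⊗ y) z).hom
          ≫ ractHom (𝟙 m) (α_ x y z).hom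
  triangleR : ∀ (m : M) (x : D),
    ractHom ((unitR m).hom) (𝟙 x)
      = (assocR m (𝟙_ D) x).hom ≫ ractHom (𝟙 m) (λ_ x).hom
  pentagonMix₁ : ∀ (x y : C) (m : M) (u : D),
    (middle (x ⊗ y) m u).hom ≫ (assocL x y (ract m u)).hom
      = ractHom ((assocL x y m).hom) (𝟙 u) ≫ (middle x (act y m) u).hom
          ≫ actHom (𝟙 x) ((middle y m u).hom)
  pentagonMix₂ : ∀ (x : C) (m : M) (u v : D),
    (assocR (act x m) u v).hom ≫ (middle x m (u ⊗ v)).hom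
      = ractHom ((middle x m u).hom) (𝟙 v) ≫ (middle x (ract m u) v).hom
          ≫ actHom (𝟙 x) ((assocR m u v).hom)

namespace BimodCat

variable {C : Type*} [Category C] [MonoidalCategory C]
variable {D : Type*} [Category D] [MonoidalCategory D]
variable {M : Type*} [Category M]

/-- The coherence isomorphism `c^{##}_{x,y,m}` of the double-opposite bimodule category
`M^{##}`, whose left action is `x ▷^{##} m = x** ▷ m`. -/
def ddAssocL (B : BimodCat C D M) (P : PivData C) (x y : C) (m : M) :
    B.act (P.ddual (x ⊗ y)) m ⟶ B.act (P.ddual x) (B.act (P.ddual y) m) :=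
  B.actHom (P.ddμ x y) (𝟙 m) ≫ (B.assocL (P.ddual x) (P.ddual y) m).hom

/-- The unit coherence `γ^{##}_m` of `M^{##}`. -/
def ddUnitL (B : BimodCat C D M) (P : PivData C) (m : M) :
    B.act (P.ddual (𝟙_ C)) m ⟶ m :=
  B.actHom P.ddμ₀ (𝟙 m) ≫ (B.unitL m).hom

/-- The coherence isomorphism `d^{##}_{m,x,y}` of `M^{##}`, whose right action is
`m ◁^{##} d = m ◁ d**`. -/
def ddAssocR (B : BimodCat C D M) (P : PivData D) (m : M) (x y : D) :
    B.ract (B.ract m (P.ddual x)) (P.ddual y) ⟶ B.ract m (P.ddual (x ⊗ y)) :=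
  (B.assocR m (P.ddual x) (P.ddual y)).hom ≫ B.ractHom (𝟙 m) (P.ddμinv x y)

/-- The unit coherence `δ^{##}_m` of `M^{##}`. -/
def ddUnitR (B : BimodCat C D M) (P : PivData D) (m : M) :
    B.ract m (P.ddual (𝟙_ D)) ⟶ m :=
  B.ractHom (𝟙 m) P.ddμ₀ ≫ (B.unitR m).hom

/-- The coherence isomorphism `s_{x,m} = ω_x ▷ 1_m` of the identity functor
`Ω : M^{##} → M`. -/
def sΩ (B : BimodCat C D M) (P : PivData C) (x : C) (m : M) :
    B.act (P.ddual x) m ⟶ B.act x m :=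
  B.actHom (P.pivot x).hom (𝟙 m)

/-- The coherence isomorphism `t_{m,d} = 1_m ◁ ω⁻¹_d` of the identity functor
`Ω : M^{##} → M`. -/
def tΩ (B : BimodCat C D M) (P : PivData D) (m : M) (d : D) :
    B.ract m d ⟶ B.ract m (P.ddual d) :=
  B.ractHom (𝟙 m) (P.pivot d).inv

end BimodCat

attribute [reducible] PivData.ddual

namespace PivData

variable {C : Type*} [Category C] [MonoidalCategory C]

lemma ddualMap_eq (P : PivData C) {x y : C} (f : x ⟶ y) :
    P.ddualMap f = (P.pivot x).hom ≫ f ≫ (P.pivot y).inv := by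
  rw [← Category.assoc, ← P.pivot_natural f, Category.assoc, Iso.hom_inv_id,
    Category.comp_id]; rfl

lemma pivot_natural_inv (P : PivData C) {x y : C} (f : x ⟶ y) :
    f ≫ (P.pivot y).inv = (P.pivot x).inv ≫ P.ddualMap f := by
  simp [P.ddualMap_eq f]

lemma ddμ_ddμinv (P : PivData C) (x y : C) :
    P.ddμ x y ≫ P.ddμinv x y = 𝟙 _ := by
  simp only [ddμ, ddμinv, Category.assoc, Iso.hom_inv_id_assoc]
  rw [← P.dualMap_comp, Iso.hom_inv_id, P.dualMap_id]

lemma pivot_tensor_inv (P : PivData C) (x y : C) :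
    (P.pivot (x ⊗ y)).inv = ((P.pivot x).inv ⊗ₘ (P.pivot y).inv) ≫ P.ddμinv x y := by
  have h : (P.pivot (x ⊗ y)).hom
      ≫ ((P.pivot x).inv ⊗ₘ (P.pivot y).inv) ≫ P.ddμinv x y = 𝟙 _ := by
    rw [P.pivot_tensor x y]
    simp only [Category.assoc, tensorHom_comp_tensorHom_assoc, Iso.hom_inv_id, id_tensorHom_id]
    simpa [ddμ] using P.ddμ_ddμinv x y
  calc (P.pivot (x ⊗ y)).inv
      = (P.pivot (x ⊗ y)).inv ≫ ((P.pivot (x ⊗ y)).hom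
          ≫ ((P.pivot x).inv ⊗ₘ (P.pivot y).inv) ≫ P.ddμinv x y) := by
        rw [h, Category.comp_id]
    _ = ((P.pivot x).inv ⊗ₘ (P.pivot y).inv) ≫ P.ddμinv x y := by
        rw [Iso.inv_hom_id_assoc]

end PivData

/-!
Let `C, D` be pivotal fusion categories and `M` a finite semisimple `(C,D)`-bimodule
category, with double-opposite bimodule category `M^{##}` (actions `x** ▷ m`,
`m ◁ d**`).  Then the identity functor together with the coherence isomorphisms
`s_{x,m} = ω_x ▷ id_m` and `t_{m,d} = id_m ◁ ω⁻¹_d` given by the pivots is an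
equivalence of `(C,D)`-bimodule categories `Ω : M^{##} → M`: the `s` and `t` are
natural isomorphisms satisfying the pentagon, triangle and hexagon axioms of a
bimodule functor, and the underlying functor (the identity) is an equivalence.
-/
theorem doubleOpposite_identity_is_bimodule_equivalence
    {C : Type*} [Category C] [MonoidalCategory C]
    {D : Type*} [Category D] [MonoidalCategory D]
    {M : Type*} [Category M]
    (B : BimodCat C D M) (PC : PivData C) (PD : PivData D) :
    -- `s` and `t` are isomorphisms (and the identity functor is an equivalence)
    (∀ (x : C) (m : M), IsIso (B.sΩ PC x m)) ∧
    (∀ (m : M) (d : D), IsIso (B.tΩ PD m d)) ∧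
    -- naturality of `s` and `t`
    (∀ {x y : C} {m m' : M} (f : x ⟶ y) (g : m ⟶ m'),
      B.actHom (PC.ddualMap f) g ≫ B.sΩ PC y m' = B.sΩ PC x m ≫ B.actHom f g) ∧
    (∀ {m m' : M} {x y : D} (g : m ⟶ m') (f : x ⟶ y),
      B.ractHom g f ≫ B.tΩ PD m' y = B.tΩ PD m x ≫ B.ractHom g (PD.ddualMap f)) ∧
    -- pentagon and triangle axioms for `s`
    (∀ (x y : C) (m : M),
      B.sΩ PC (x ⊗ y) m ≫ (B.assocL x y m).hom
        = B.ddAssocL PC x y m ≫ B.sΩ PC x (B.act (PC.ddual y) m)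
            ≫ B.actHom (𝟙 x) (B.sΩ PC y m)) ∧
    (∀ m : M, B.sΩ PC (𝟙_ C) m ≫ (B.unitL m).hom = B.ddUnitL PC m) ∧
    -- pentagon and triangle axioms for `t`
    (∀ (m : M) (x y : D),
      (B.assocR m x y).hom ≫ B.tΩ PD m (x ⊗ y)
        = B.ractHom (B.tΩ PD m x) (𝟙 y) ≫ B.tΩ PD (B.ract m (PD.ddual x)) y
            ≫ B.ddAssocR PD m x y) ∧
    (∀ m : M, B.tΩ PD m (𝟙_ D) ≫ B.ddUnitR PD m = (B.unitR m).hom) ∧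
    -- hexagon axiom
    (∀ (x : C) (m : M) (d : D),
      B.tΩ PD (B.act (PC.ddual x) m) d ≫ (B.middle (PC.ddual x) m (PD.ddual d)).hom
          ≫ B.sΩ PC x (B.ract m (PD.ddual d))
        = B.ractHom (B.sΩ PC x m) (𝟙 d) ≫ (B.middle x m d).hom
            ≫ B.actHom (𝟙 x) (B.tΩ PD m d)) := by
  refine ⟨?_, ?_, ?_, ?_, ?_, ?_, ?_, ?_, ?_⟩
  · -- s is iso
    intro x m
    refine ⟨B.actHom (PC.pivot x).inv (𝟙 m), ?_, ?_⟩
    · show B.actHom (PC.pivot x).hom (𝟙 m) ≫ _ = _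
      rw [← B.actHom_comp, Iso.hom_inv_id, Category.comp_id, B.actHom_id]
    · show _ ≫ B.actHom (PC.pivot x).hom (𝟙 m) = _
      rw [← B.actHom_comp, Iso.inv_hom_id, Category.comp_id, B.actHom_id]
  · -- t is iso
    intro m d
    refine ⟨B.ractHom (𝟙 m) (PD.pivot d).hom, ?_, ?_⟩
    · show B.ractHom (𝟙 m) (PD.pivot d).inv ≫ _ = _
      rw [← B.ractHom_comp, Iso.inv_hom_id, Category.comp_id, B.ractHom_id]
    · show _ ≫ B.ractHom (𝟙 m) (PD.pivot d).inv = _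
      rw [← B.ractHom_comp, Iso.hom_inv_id, Category.comp_id, B.ractHom_id]
  · -- naturality of s
    intro x y m m' f g
    unfold BimodCat.sΩ
    rw [← B.actHom_comp, ← B.actHom_comp, Category.comp_id, Category.id_comp]
    congr 1
    exact PC.pivot_natural f
  · -- naturality of t
    intro m m' x y g f
    unfold BimodCat.tΩ
    rw [← B.ractHom_comp, ← B.ractHom_comp, Category.comp_id, Category.id_comp]
    congr 1
    exact PD.pivot_natural_inv f
  · -- pentagon for s
    intro x y m
    unfold BimodCat.sΩ BimodCat.ddAssocL
    rw [PC.pivot_tensor x y]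
    have hμ : PC.dualMap (PC.μ x y).inv ≫ (PC.μ (PC.dual y) (PC.dual x)).hom
        ≫ ((PC.pivot x).hom ⊗ₘ (PC.pivot y).hom)
        = PC.ddμ x y ≫ ((PC.pivot x).hom ⊗ₘ (PC.pivot y).hom) := by
      simp [PivData.ddμ]
    rw [hμ]
    have h1 : B.actHom (PC.ddμ x y ≫ ((PC.pivot x).hom ⊗ₘ (PC.pivot y).hom)) (𝟙 m)
        = B.actHom (PC.ddμ x y) (𝟙 m)
          ≫ B.actHom ((PC.pivot x).hom ⊗ₘ (PC.pivot y).hom) (𝟙 m) := by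
      rw [← B.actHom_comp, Category.comp_id]
    rw [h1, Category.assoc, B.assocL_natural]
    rw [Category.assoc, ← B.actHom_comp, Category.id_comp, Category.comp_id]
  · -- triangle for s
    intro m
    unfold BimodCat.sΩ BimodCat.ddUnitL
    rw [PC.pivot_unit]
    rfl
  · -- pentagon for t
    intro m x y
    unfold BimodCat.tΩ BimodCat.ddAssocR PivData.ddual
    rw [PD.pivot_tensor_inv x y]
    have h1 : B.ractHom (B.ractHom (𝟙 m) (PD.pivot x).inv) (𝟙 y)
        ≫ B.ractHom (𝟙 (B.ract m (PD.dual (PD.dual x)))) (PD.pivot y).inv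
        = B.ractHom (B.ractHom (𝟙 m) (PD.pivot x).inv) (PD.pivot y).inv := by
      rw [← B.ractHom_comp, Category.comp_id, Category.id_comp]
    rw [← Category.assoc, ← Category.assoc, h1, Category.assoc, ← Category.assoc,
      B.assocR_natural, Category.assoc, ← B.ractHom_comp, Category.comp_id]
  · -- triangle for t
    intro m
    unfold BimodCat.tΩ BimodCat.ddUnitR PivData.ddμ₀
    rw [← PD.pivot_unit, ← Category.assoc, ← B.ractHom_comp, Iso.inv_hom_id,
      Category.comp_id, B.ractHom_id, Category.id_comp]
  · -- hexagon
    intro x m d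
    unfold BimodCat.sΩ BimodCat.tΩ PivData.ddual
    have h1 : B.ractHom (B.actHom (PC.pivot x).hom (𝟙 m)) (𝟙 (PD.dual (PD.dual d)))
        ≫ (B.middle x m (PD.dual (PD.dual d))).hom
        = (B.middle (PC.dual (PC.dual x)) m (PD.dual (PD.dual d))).hom
          ≫ B.actHom (PC.pivot x).hom (𝟙 (B.ract m (PD.dual (PD.dual d)))) := by
      rw [B.middle_natural, B.ractHom_id]
    rw [← h1]
    have h2 : B.ractHom (𝟙 (B.act (PC.dual (PC.dual x)) m)) (PD.pivot d).inv
        ≫ B.ractHom (B.actHom (PC.pivot x).hom (𝟙 m)) (𝟙 (PD.dual (PD.dual d)))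
        = B.ractHom (B.actHom (PC.pivot x).hom (𝟙 m)) (𝟙 d)
          ≫ B.ractHom (𝟙 (B.act x m)) (PD.pivot d).inv := by
      rw [← B.ractHom_comp, ← B.ractHom_comp, Category.comp_id, Category.comp_id,
        Category.id_comp, Category.id_comp]
    rw [← Category.assoc, h2, Category.assoc]
    congr 1
    have h3 : B.ractHom (𝟙 (B.act x m)) (PD.pivot d).inv
        = B.ractHom (B.actHom (𝟙 x) (𝟙 m)) (PD.pivot d).inv := by
      rw [B.actHom_id]
    rw [h3, B.middle_natural]
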